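/- Let σ be a permutation of length k ≥ 3 with σ₁ > σ_k. Then σ straddles the direct sum σ ⊕ σ, and consequently the interval [σ, σ⊕σ] in the consecutive pattern poset is disconnected. -/

import Mathlib

open scoped Classical

noncomputable section

/-- A permutation of length `n`, written in one-line notation as `τ 0, τ 1, …, τ (n-1)`. -/
abbrev Perm' (n : ℕ) := Equiv.Perm (Fin n)

/-- `σ` occurs in `τ` as a consecutive pattern at (0-indexed) starting position `i`:
the window `τ i, …, τ (i+m-1)` of adjacent entries is in the same relative order as `σ`. -/
def OccursAt {m n : ℕ} (σ : Perm' m) (τ : Perm' n) (i : ℕ) : Prop :=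
  ∃ h : i + m ≤ n, ∀ a b : Fin m,
    σ a < σ b ↔
      τ ⟨i + a, by have := a.isLt; omega⟩ < τ ⟨i + b, by have := b.isLt; omega⟩

/-- Consecutive pattern containment `σ ≤ τ`. -/
def PattLE {m n : ℕ} (σ : Perm' m) (τ : Perm' n) : Prop :=
  ∃ i, OccursAt σ τ i

/-- Permutations of arbitrary length: the carrier of the consecutive pattern poset. -/
abbrev PermS : Type := Σ n : ℕ, Perm' n

/-- The order of the consecutive pattern poset. -/
def pLE (p q : PermS) : Prop := PattLE p.2 q.2

/-- The strict order of the consecutive pattern poset. -/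
def pLT (p q : PermS) : Prop := pLE p q ∧ p ≠ q

/-- The covering relation of the consecutive pattern poset. -/
def pCovBy (p q : PermS) : Prop :=
  pLT p q ∧ ∀ r : PermS, pLT p r → pLT r q → False

/-- The open interval `(p,q)` in the consecutive pattern poset. -/
def openInterval (p q : PermS) : Set PermS := {r | pLT p r ∧ pLT r q}

/-- The Hasse diagram of the open interval `(p,q)`: vertices are the permutations strictly
between `p` and `q`, edges are the covering relations of the consecutive pattern poset. -/
def hasse (p q : PermS) : SimpleGraph (openInterval p q) :=
  SimpleGraph.fromRel fun a b => pCovBy a.1 b.1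

/-- The interval `[p,q]` is disconnected if the Hasse diagram of `(p,q)` is not connected. -/
def IntervalDisconnected (p q : PermS) : Prop := ¬ (hasse p q).Connected

/-- `window τ i m` is the reduction of the window of `τ` of length `m` starting at
(0-indexed) position `i`, i.e. the pattern `τ[i+1, i+m]` in 1-indexed notation. -/
def window {n : ℕ} (τ : Perm' n) (i m : ℕ) : Perm' m :=
  if h : i + m ≤ n then
    (Tuple.sort fun a : Fin m => τ ⟨i + a, by have := a.isLt; omega⟩)⁻¹
  else 1

/-- `τ` is monotone, i.e. equal to `12…n` or `n…21`. -/
def IsMonotone {n : ℕ} (τ : Perm' n) : Prop :=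
  (∀ a b : Fin n, a ≤ b → τ a ≤ τ b) ∨ (∀ a b : Fin n, a ≤ b → τ b ≤ τ a)

/-- `τ` has a bifix (a common proper prefix and proper suffix) of length `k`. -/
def HasBifixLen {n : ℕ} (τ : Perm' n) (k : ℕ) : Prop :=
  0 < k ∧ k < n ∧ window τ 0 k = window τ (n - k) k

/-- The length `|x(τ)|` of the exterior of `τ`, the longest bifix of `τ`. -/
def extLen {n : ℕ} (τ : Perm' n) : ℕ := Nat.findGreatest (HasBifixLen τ) n

/-- The exterior `x(τ)` of `τ`: its longest bifix. -/
def extPerm {n : ℕ} (τ : Perm' n) : Perm' (extLen τ) := window τ 0 (extLen τ)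

/-- The interior `i(τ) = τ[2,n-1]` of `τ`. -/
def intPerm {n : ℕ} (τ : Perm' n) : Perm' (n - 2) := window τ 1 (n - 2)

/-- `p` straddles `q`: `p < q`, `p` is both a prefix and a suffix of `q`,
and `p` has no other occurrence in `q`. -/
def Straddles (p q : PermS) : Prop :=
  pLT p q ∧ OccursAt p.2 q.2 0 ∧ OccursAt p.2 q.2 (q.1 - p.1) ∧
    ∀ i, OccursAt p.2 q.2 i → i = 0 ∨ i = q.1 - p.1

/-- The interval `[p,q]` contains a non-trivial disconnected subinterval, i.e. a
subinterval `[a,b]` of rank at least 3 which is disconnected. -/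
def HasNontrivDisconSub (p q : PermS) : Prop :=
  ∃ a b : PermS, pLE p a ∧ pLE a b ∧ pLE b q ∧ a.1 + 3 ≤ b.1 ∧ IntervalDisconnected a b

/-- The finite set of all permutations of length at most `N`. -/
def permsUpTo (N : ℕ) : Finset PermS :=
  (Finset.range (N + 1)).sigma fun n => (Finset.univ : Finset (Perm' n))

/-- The closed interval `[p,q]` of the consecutive pattern poset, as a finite set. -/
def intervalF (p q : PermS) : Finset PermS :=
  (permsUpTo q.1).filter fun r => pLE p r ∧ pLE r q

/-- The number of elements of the interval `[σ,τ]` of rank `r`, i.e. of length `|σ| + r`. -/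
def rankCard {m n : ℕ} (σ : Perm' m) (τ : Perm' n) (r : ℕ) : ℕ :=
  ((permsUpTo n).filter fun p => pLE ⟨m, σ⟩ p ∧ pLE p ⟨n, τ⟩ ∧ p.1 = m + r).card

/-- The direct sum `σ ⊕ π` of two permutations. -/
def dsum {m k : ℕ} (σ : Perm' m) (π : Perm' k) : Perm' (m + k) :=
  finSumFinEquiv.permCongr (σ.sumCongr π)


/-! ### Auxiliary lemmas -/

lemma occ_spec {m n : ℕ} {σ : Perm' m} {τ : Perm' n} {i : ℕ} (h : OccursAt σ τ i)
    (a b : Fin m) {x y : ℕ} (hxa : x = i + a) (hyb : y = i + b) (hx : x < n) (hy : y < n) :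
    (σ a < σ b ↔ τ ⟨x, hx⟩ < τ ⟨y, hy⟩) := by
  subst hxa; subst hyb; exact h.2 a b

lemma occ_trans {m p n : ℕ} {σ : Perm' m} {π : Perm' p} {τ : Perm' n} {j i : ℕ}
    (h1 : OccursAt σ π j) (h2 : OccursAt π τ i) : OccursAt σ τ (i + j) := by
  have hb1 := h1.1; have hb2 := h2.1
  refine ⟨by omega, fun a b => ?_⟩
  have H := occ_spec h2 ⟨j + a, by omega⟩ ⟨j + b, by omega⟩
    (x := i + j + a) (y := i + j + b)
    (by show i + j + (a : ℕ) = i + (j + a); omega)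
    (by show i + j + (b : ℕ) = i + (j + b); omega) (by omega) (by omega)
  exact (h1.2 a b).trans H

lemma occ_restrict {m p n : ℕ} {σ : Perm' m} {π : Perm' p} {τ : Perm' n} {i j : ℕ}
    (hπ : OccursAt π τ i) (hσ : OccursAt σ τ (i + j)) (hj : j + m ≤ p) :
    OccursAt σ π j := by
  have hn := hσ.1
  have hn2 := hπ.1
  refine ⟨hj, fun a b => ?_⟩
  have h1 := occ_spec hσ a b (x := i + j + a) (y := i + j + b)
    (by omega) (by omega) (by omega) (by omega)
  have h2 := occ_spec hπ ⟨j + a, by omega⟩ ⟨j + b, by omega⟩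
    (x := i + j + a) (y := i + j + b)
    (by show i + j + (a : ℕ) = i + (j + a); omega)
    (by show i + j + (b : ℕ) = i + (j + b); omega) (by omega) (by omega)
  exact h1.trans h2.symm

lemma occ_self_eq {m : ℕ} {σ π : Perm' m} (h : OccursAt σ π 0) : σ = π := by
  have H : ∀ a b : Fin m, σ a < σ b ↔ π a < π b := by
    intro a b
    have := occ_spec h a b (x := (a : ℕ)) (y := (b : ℕ))
      (by omega) (by omega) a.isLt b.isLt
    simpa using this
  have key : ∀ x y : Fin m, π (σ.symm x) < π (σ.symm y) ↔ x < y := by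
    intro x y
    rw [← H (σ.symm x) (σ.symm y)]
    simp
  let e : Fin m ≃o Fin m :=
    { toEquiv := σ.symm.trans (π : Equiv.Perm (Fin m))
      map_rel_iff' := by
        intro x y
        simp only [Equiv.coe_fn_mk, Equiv.trans_apply]
        rw [← not_lt, ← not_lt, key] }
  have he : ∀ x, e x = x := by
    intro x
    rw [Subsingleton.elim e (OrderIso.refl (Fin m))]
    rfl
  refine Equiv.ext fun a => ?_
  have h2 : π (σ.symm (σ a)) = σ a := he (σ a)
  rw [Equiv.symm_apply_apply] at h2
  exact h2.symm

lemma sort_inv_occ {m : ℕ} {α : Type*} [LinearOrder α] (f : Fin m → α)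
    (hinj : Function.Injective f) (a b : Fin m) :
    (Tuple.sort f)⁻¹ a < (Tuple.sort f)⁻¹ b ↔ f a < f b := by
  have hsm : StrictMono (f ∘ Tuple.sort f) :=
    (Tuple.monotone_sort f).strictMono_of_injective (hinj.comp (Tuple.sort f).injective)
  rw [← hsm.lt_iff_lt]
  simp [Function.comp]

lemma window_occurs {n : ℕ} (τ : Perm' n) {i m : ℕ} (h : i + m ≤ n) :
    OccursAt (window τ i m) τ i := by
  refine ⟨h, fun a b => ?_⟩
  unfold window
  rw [dif_pos h]
  have hinj : Function.Injective
      (fun a : Fin m => τ ⟨i + a, by have := a.isLt; omega⟩) := by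
    intro x y hxy
    have h2 : i + (x : ℕ) = i + (y : ℕ) := congrArg Fin.val (τ.injective hxy)
    exact Fin.ext (by omega)
  exact sort_inv_occ _ hinj a b

lemma dsum_left {m k : ℕ} (σ : Perm' m) (π : Perm' k) (a : Fin m) :
    dsum σ π (Fin.castAdd k a) = Fin.castAdd k (σ a) := by
  simp [dsum]

lemma dsum_right {m k : ℕ} (σ : Perm' m) (π : Perm' k) (a : Fin k) :
    dsum σ π (Fin.natAdd m a) = Fin.natAdd m (π a) := by
  simp [dsum]

lemma dval_lo {k : ℕ} (σ : Perm' k) {x : ℕ} (hx : x < k + k) (h : x < k) :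
    ((dsum σ σ ⟨x, hx⟩ : Fin (k + k)) : ℕ) = σ ⟨x, h⟩ := by
  have hx' : (⟨x, hx⟩ : Fin (k + k)) = Fin.castAdd k ⟨x, h⟩ := rfl
  rw [hx', dsum_left]
  rfl

lemma dval_hi {k : ℕ} (σ : Perm' k) {x : ℕ} (hx : x < k + k) (h : k ≤ x) :
    ((dsum σ σ ⟨x, hx⟩ : Fin (k + k)) : ℕ) = k + σ ⟨x - k, by omega⟩ := by
  have hx' : (⟨x, hx⟩ : Fin (k + k)) = Fin.natAdd k ⟨x - k, by omega⟩ := by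
    apply Fin.ext
    show x = k + (x - k)
    omega
  rw [hx', dsum_right]
  rfl

lemma occ0 {k : ℕ} (σ : Perm' k) : OccursAt σ (dsum σ σ) 0 := by
  refine ⟨by omega, fun a b => ?_⟩
  simp only [Fin.lt_def]
  rw [dval_lo σ _ (show 0 + (a : ℕ) < k by omega), dval_lo σ _ (show 0 + (b : ℕ) < k by omega)]
  have ea : (⟨0 + (a : ℕ), by omega⟩ : Fin k) = a := Fin.ext (by show 0 + (a:ℕ) = (a:ℕ); omega)
  have eb : (⟨0 + (b : ℕ), by omega⟩ : Fin k) = b := Fin.ext (by show 0 + (b:ℕ) = (b:ℕ); omega)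
  rw [ea, eb]

lemma occk {k : ℕ} (σ : Perm' k) : OccursAt σ (dsum σ σ) k := by
  refine ⟨by omega, fun a b => ?_⟩
  simp only [Fin.lt_def]
  rw [dval_hi σ _ (show k ≤ k + (a : ℕ) by omega), dval_hi σ _ (show k ≤ k + (b : ℕ) by omega)]
  have ea : (⟨k + (a : ℕ) - k, by omega⟩ : Fin k) = a := Fin.ext (by show k + (a:ℕ) - k = (a:ℕ); omega)
  have eb : (⟨k + (b : ℕ) - k, by omega⟩ : Fin k) = b := Fin.ext (by show k + (b:ℕ) - k = (b:ℕ); omega)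
  rw [ea, eb]
  omega

set_option maxHeartbeats 1000000 in
lemma occ_uniq {k : ℕ} (hk : 3 ≤ k) (σ : Perm' k)
    (h : σ ⟨k - 1, Nat.sub_lt (Nat.lt_of_lt_of_le (by decide) hk) Nat.one_pos⟩ <
      σ ⟨0, Nat.lt_of_lt_of_le (by decide) hk⟩)
    {i : ℕ} (ho : OccursAt σ (dsum σ σ) i) : i = 0 ∨ i = k := by
  by_contra hc
  push_neg at hc
  have hik : i + k ≤ k + k := ho.1
  have h1 : 1 ≤ i := by omega
  have h2 : i ≤ k - 1 := by omega
  have hlt : dsum σ σ ⟨i, by omega⟩ < dsum σ σ ⟨i + k - 1, by omega⟩ := by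
    rw [Fin.lt_def, dval_lo σ _ (show i < k by omega), dval_hi σ _ (show k ≤ i + k - 1 by omega)]
    have := (σ ⟨i, by omega⟩).isLt
    omega
  have H := occ_spec ho (⟨0, by omega⟩ : Fin k) (⟨k - 1, by omega⟩ : Fin k)
    (x := i) (y := i + k - 1) (by show i = i + 0; omega)
    (by show i + k - 1 = i + (k - 1); omega) (by omega) (by omega)
  exact absurd (H.mpr hlt) (not_lt.mpr (le_of_lt h))

lemma permS_ne_of_len {a b : PermS} (h : a.1 ≠ b.1) : a ≠ b :=
  fun he => h (congrArg Sigma.fst he)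

lemma pLT_len {a b : PermS} (h : pLT a b) : a.1 < b.1 := by
  obtain ⟨m, α⟩ := a
  obtain ⟨n', β⟩ := b
  obtain ⟨ha, hne⟩ := h
  obtain ⟨i, hi⟩ := ha
  have hle : i + m ≤ n' := hi.1
  show m < n'
  rcases eq_or_lt_of_le (show m ≤ n' by omega) with heq | hlt
  · exfalso
    subst heq
    have hi0 : i = 0 := by omega
    subst hi0
    have hab : α = β := occ_self_eq hi
    exact hne (by rw [hab])
  · exact hlt

lemma invar {k : ℕ} (σ : Perm' k)
    (huniq : ∀ i, OccursAt σ (dsum σ σ) i → i = 0 ∨ i = k)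
    {r1 r2 : PermS}
    (h1a : pLT ⟨k, σ⟩ r1) (h1b : pLT r1 ⟨k + k, dsum σ σ⟩)
    (h2a : pLT ⟨k, σ⟩ r2) (h2b : pLT r2 ⟨k + k, dsum σ σ⟩)
    (h12 : pLT r1 r2) : OccursAt σ r1.2 0 ↔ OccursAt σ r2.2 0 := by
  have hm1 : k < r1.1 := pLT_len h1a
  have hm1' : r1.1 < k + k := pLT_len h1b
  have hm2 : k < r2.1 := pLT_len h2a
  have hm2' : r2.1 < k + k := pLT_len h2b
  obtain ⟨p, hp⟩ := h12.1
  obtain ⟨i2, hi2⟩ := h2b.1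
  constructor
  · intro h0
    have hστ : OccursAt σ (dsum σ σ) (i2 + p + 0) := occ_trans h0 (occ_trans hp hi2)
    rcases huniq _ hστ with h' | h'
    · have hp0 : p = 0 := by omega
      have h3 := occ_trans h0 hp
      rw [hp0] at h3
      simpa using h3
    · exfalso
      have hw : (i2 + p) + r1.1 ≤ k + k := (occ_trans hp hi2).1
      omega
  · intro h0
    have hi20 : i2 = 0 := by
      rcases huniq _ (occ_trans h0 hi2) with h' | h'
      · omega
      · exfalso
        have hlen2 : i2 + r2.1 ≤ k + k := hi2.1
        omega
    obtain ⟨j, hj⟩ := h1a.1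
    have hjτ := occ_trans hj (occ_trans hp hi2)
    rcases huniq _ hjτ with h' | h'
    · have hj0 : j = 0 := by omega
      rw [hj0] at hj
      exact hj
    · exfalso
      have hjlen : j + k ≤ r1.1 := hj.1
      have hplen : p + r1.1 ≤ r2.1 := hp.1
      omega


/-- from the proof of Theorem 3.5: if `σ` has length `k ≥ 3` and
`σ₁ > σ_k`, then `σ` straddles `σ ⊕ σ`, and hence `[σ, σ ⊕ σ]` is disconnected. -/
theorem stmt18 {k : ℕ} (hk : 3 ≤ k) (σ : Perm' k)
    (h : σ ⟨k - 1, by omega⟩ < σ ⟨0, by omega⟩) :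
    Straddles ⟨k, σ⟩ ⟨k + k, dsum σ σ⟩ ∧
      IntervalDisconnected ⟨k, σ⟩ ⟨k + k, dsum σ σ⟩ := by
  have huniq : ∀ i, OccursAt σ (dsum σ σ) i → i = 0 ∨ i = k := fun i hi => occ_uniq hk σ h hi
  have hplt : pLT (⟨k, σ⟩ : PermS) ⟨k + k, dsum σ σ⟩ :=
    ⟨⟨0, occ0 σ⟩, permS_ne_of_len (by show k ≠ k + k; omega)⟩
  constructor
  · refine ⟨hplt, occ0 σ, ?_, ?_⟩
    · show OccursAt σ (dsum σ σ) (k + k - k)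
      rw [Nat.add_sub_cancel]
      exact occk σ
    · intro i hi
      have := huniq i hi
      show i = 0 ∨ i = k + k - k
      omega
  · intro hcon
    have hu_occ : OccursAt (window (dsum σ σ) 0 (k + 1)) (dsum σ σ) 0 :=
      window_occurs _ (by omega)
    have hv_occ : OccursAt (window (dsum σ σ) (k - 1) (k + 1)) (dsum σ σ) (k - 1) :=
      window_occurs _ (by omega)
    have hσu : OccursAt σ (window (dsum σ σ) 0 (k + 1)) 0 :=
      occ_restrict hu_occ (occ0 σ) (by omega)
    have hσv : OccursAt σ (window (dsum σ σ) (k - 1) (k + 1)) 1 :=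
      occ_restrict hv_occ
        (show OccursAt σ (dsum σ σ) (k - 1 + 1) by
          rw [show k - 1 + 1 = k by omega]; exact occk σ) (by omega)
    have hnv : ¬ OccursAt σ (window (dsum σ σ) (k - 1) (k + 1)) 0 := by
      intro hcon0
      have h0 := occ_trans hcon0 hv_occ
      rcases huniq _ h0 with h' | h' <;> omega
    have hu1 : pLT (⟨k, σ⟩ : PermS) ⟨k + 1, window (dsum σ σ) 0 (k + 1)⟩ :=
      ⟨⟨0, hσu⟩, permS_ne_of_len (by show k ≠ k + 1; omega)⟩
    have hu2 : pLT (⟨k + 1, window (dsum σ σ) 0 (k + 1)⟩ : PermS) ⟨k + k, dsum σ σ⟩ :=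
      ⟨⟨0, hu_occ⟩, permS_ne_of_len (by show k + 1 ≠ k + k; omega)⟩
    have hv1 : pLT (⟨k, σ⟩ : PermS) ⟨k + 1, window (dsum σ σ) (k - 1) (k + 1)⟩ :=
      ⟨⟨1, hσv⟩, permS_ne_of_len (by show k ≠ k + 1; omega)⟩
    have hv2 : pLT (⟨k + 1, window (dsum σ σ) (k - 1) (k + 1)⟩ : PermS) ⟨k + k, dsum σ σ⟩ :=
      ⟨⟨k - 1, hv_occ⟩, permS_ne_of_len (by show k + 1 ≠ k + k; omega)⟩
    have Pinv : ∀ x y : (openInterval (⟨k, σ⟩ : PermS) ⟨k + k, dsum σ σ⟩),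
        (hasse ⟨k, σ⟩ ⟨k + k, dsum σ σ⟩).Adj x y →
        (OccursAt σ x.1.2 0 ↔ OccursAt σ y.1.2 0) := by
      intro x y hxy
      obtain ⟨hx1, hx2⟩ := x.2
      obtain ⟨hy1, hy2⟩ := y.2
      simp only [hasse, SimpleGraph.fromRel_adj] at hxy
      obtain ⟨-, hcov | hcov⟩ := hxy
      · exact invar σ huniq hx1 hx2 hy1 hy2 hcov.1
      · exact (invar σ huniq hy1 hy2 hx1 hx2 hcov.1).symm
    have key : ∀ (x y : openInterval (⟨k, σ⟩ : PermS) ⟨k + k, dsum σ σ⟩)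
        (w : (hasse ⟨k, σ⟩ ⟨k + k, dsum σ σ⟩).Walk x y),
        (OccursAt σ x.1.2 0 ↔ OccursAt σ y.1.2 0) := by
      intro x y w
      induction w with
      | nil => exact Iff.rfl
      | cons hadj _ ih => exact (Pinv _ _ hadj).trans ih
    obtain ⟨w⟩ := hcon.preconnected
      ⟨⟨k + 1, window (dsum σ σ) 0 (k + 1)⟩, ⟨hu1, hu2⟩⟩
      ⟨⟨k + 1, window (dsum σ σ) (k - 1) (k + 1)⟩, ⟨hv1, hv2⟩⟩
    exact hnv ((key _ _ w).mp hσu)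

end
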